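/- The map Θ sending ζ ∈ ℂ with Im ζ ≥ 0 to the matrix [[|ζ|²/(|ζ|²+1), Re ζ/(|ζ|²+1)], [Re ζ/(|ζ|²+1), 1/(|ζ|²+1)]] and ∞ to [[1,0],[0,0]] is a bijection from the closed upper half-plane (including ∞) onto the set of constant 2×2 real positive semidefinite matrices of trace 1, with inverse given by [[h₁,h₃],[h₃,h₂]] ↦ (h₃ + i√(h₁h₂ - h₃²))/h₂ when h₂ ≠ 0 and [[1,0],[0,0]] ↦ ∞. -/

import Mathlib

open Set

noncomputable section

/-- The closed upper half-plane in the Riemann sphere: `ℂ_+ ∪ ℝ ∪ {∞}`. -/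
def closedUHP : Set (OnePoint ℂ) := {p | p = none ∨ ∃ w : ℂ, 0 ≤ w.im ∧ p = some w}

/-- The map `Θ` from the closed upper half-plane (including `∞`) to constant
Hamiltonians: `Θ(ζ) = [[|ζ|²,Re ζ;Re ζ,1]]/(|ζ|²+1)` and `Θ(∞) = [[1,0],[0,0]]`. -/
def Theta : OnePoint ℂ → Matrix (Fin 2) (Fin 2) ℝ := fun p =>
  match p with
  | none => !![1, 0; 0, 0]
  | some ζ => !![‖ζ‖ ^ 2 / (‖ζ‖ ^ 2 + 1),
                 ζ.re / (‖ζ‖ ^ 2 + 1);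
                 ζ.re / (‖ζ‖ ^ 2 + 1),
                 1 / (‖ζ‖ ^ 2 + 1)]

/-- The inverse map: `[[h₁,h₃],[h₃,h₂]] ↦ (h₃ + i√(h₁h₂ - h₃²))/h₂` when `h₂ ≠ 0`,
and `[[1,0],[0,0]] ↦ ∞`. -/
def ThetaInv : Matrix (Fin 2) (Fin 2) ℝ → OnePoint ℂ := fun A =>
  if A 1 1 = 0 then none
  else some (((A 1 0 : ℂ) +
      (Real.sqrt (A 0 0 * A 1 1 - (A 1 0) ^ 2) : ℂ) * Complex.I) / (A 1 1 : ℂ))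

lemma psd2 (a b c : ℝ) (ha : 0 ≤ a) (hc : 0 ≤ c) (hdet : b^2 ≤ a*c) :
    (!![a,b;b,c]).PosSemidef := by
  rw [Matrix.posSemidef_iff_dotProduct_mulVec]
  constructor
  · ext i j; fin_cases i <;> fin_cases j <;>
      simp [Matrix.conjTranspose, Matrix.transpose, Matrix.vecHead, Matrix.vecTail]
  · intro x
    simp [dotProduct, Matrix.mulVec, Fin.sum_univ_two]
    rcases eq_or_lt_of_le ha with h|h
    · subst h
      have hb : b = 0 := by nlinarith [sq_nonneg b]
      subst hb; nlinarith [sq_nonneg (x 1)]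
    · nlinarith [sq_nonneg (a * x 0 + b * x 1), sq_nonneg (x 1)]

lemma sq_abs' (ζ : ℂ) : ‖ζ‖ ^ 2 = ζ.re ^ 2 + ζ.im ^ 2 := by
  rw [Complex.sq_norm, Complex.normSq_apply]; ring

lemma theta_mapsTo : Set.MapsTo Theta closedUHP
    {A : Matrix (Fin 2) (Fin 2) ℝ | A.PosSemidef ∧ A.trace = 1} := by
  rintro p (rfl | ⟨w, hw, rfl⟩)
  · constructor
    · exact psd2 1 0 0 zero_le_one le_rfl (by norm_num)
    · simp [Theta, Matrix.trace, Fin.sum_univ_two]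
  · have hd : (0:ℝ) < ‖w‖ ^ 2 + 1 := by positivity
    constructor
    · refine psd2 _ _ _ (by positivity) (by positivity) ?_
      rw [div_mul_div_comm, div_pow, div_le_div_iff₀ (by positivity) (by positivity)]
      have h1 : w.re ^ 2 ≤ ‖w‖ ^ 2 := by
        rw [sq_abs']; nlinarith [sq_nonneg w.im]
      nlinarith [sq_nonneg ((‖w‖ ^ 2 + 1))]
    · simp only [Theta, Matrix.trace, Fin.sum_univ_two, Matrix.diag_apply,
        Matrix.cons_val', Matrix.cons_val_zero, Matrix.cons_val_one, Matrix.head_cons,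
        Matrix.empty_val', Matrix.cons_val_fin_one, Matrix.head_fin_const, Matrix.of_apply]
      field_simp

lemma thetaInv_mapsTo : Set.MapsTo ThetaInv
    {A : Matrix (Fin 2) (Fin 2) ℝ | A.PosSemidef ∧ A.trace = 1} closedUHP := by
  rintro A ⟨hA, -⟩
  unfold ThetaInv
  split_ifs with h
  · exact Or.inl (if_pos h)
  · refine Or.inr ⟨_, ?_, if_neg h⟩
    have h11 : 0 ≤ A 1 1 := by
      have := (Matrix.posSemidef_iff_dotProduct_mulVec.mp hA).2 ![(0:ℝ), 1]
      simpa [dotProduct, Matrix.mulVec, Fin.sum_univ_two] using this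
    have h11' : 0 < A 1 1 := lt_of_le_of_ne h11 (Ne.symm h)
    rw [Complex.div_ofReal_im]
    simp only [Complex.add_im, Complex.ofReal_im, Complex.mul_im, Complex.I_im,
      Complex.ofReal_re, Complex.I_re, mul_zero, mul_one, zero_add]
    positivity

lemma thetaInv_mk (a b c : ℝ) : ThetaInv !![a,b;b,c] =
    if c = 0 then none
    else some (((b:ℂ) + (Real.sqrt (a*c - b^2) : ℂ) * Complex.I) / (c:ℂ)) := by
  unfold ThetaInv
  by_cases hc : c = 0 <;> simp [hc] <;> rfl

lemma theta_leftInv : Set.LeftInvOn ThetaInv Theta closedUHP := by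
  rintro p (rfl | ⟨w, hw, rfl⟩)
  · simp [Theta, ThetaInv]; rfl
  · have hd : (0:ℝ) < ‖w‖ ^ 2 + 1 := by positivity
    have hd' : ‖w‖ ^ 2 + 1 ≠ 0 := ne_of_gt hd
    show ThetaInv !![_, _; _, _] = _
    rw [thetaInv_mk, if_neg (by positivity)]
    congr 1
    have hrad : ‖w‖ ^ 2 / (‖w‖ ^ 2 + 1) * (1 / (‖w‖ ^ 2 + 1))
        - (w.re / (‖w‖ ^ 2 + 1)) ^ 2 = (w.im / (‖w‖ ^ 2 + 1)) ^ 2 := by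
      field_simp
      rw [sq_abs']; ring
    rw [hrad, Real.sqrt_sq (by positivity)]
    have hdc : ((‖w‖ ^ 2 + 1 : ℝ) : ℂ) ≠ 0 :=
      (Complex.ofReal_ne_zero).mpr hd'
    rw [← Complex.re_add_im w]
    push_cast
    push_cast at hdc
    field_simp [hdc]
    simp only [Complex.add_re, Complex.add_im, Complex.ofReal_re, Complex.ofReal_im,
      Complex.mul_re, Complex.mul_im, Complex.I_re, Complex.I_im]
    ring

lemma theta_rightInv : Set.RightInvOn ThetaInv Theta
    {A : Matrix (Fin 2) (Fin 2) ℝ | A.PosSemidef ∧ A.trace = 1} := by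
  rintro A ⟨hA, htr⟩
  have hsym : A 0 1 = A 1 0 := by simpa using hA.1.apply 1 0
  have htr' : A 0 0 + A 1 1 = 1 := by
    simpa [Matrix.trace, Fin.sum_univ_two] using htr
  have h00 : 0 ≤ A 0 0 := by
    have := (Matrix.posSemidef_iff_dotProduct_mulVec.mp hA).2 ![(1:ℝ), 0]
    simpa [dotProduct, Matrix.mulVec, Fin.sum_univ_two] using this
  have h11 : 0 ≤ A 1 1 := by
    have := (Matrix.posSemidef_iff_dotProduct_mulVec.mp hA).2 ![(0:ℝ), 1]
    simpa [dotProduct, Matrix.mulVec, Fin.sum_univ_two] using this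
  unfold ThetaInv
  split_ifs with h
  · -- A 1 1 = 0
    have h00' : A 0 0 = 1 := by linarith
    have h10 : A 1 0 = 0 := by
      have := (Matrix.posSemidef_iff_dotProduct_mulVec.mp hA).2 ![A 1 0, -1]
      simp [dotProduct, Matrix.mulVec, Fin.sum_univ_two, h, hsym, h00'] at this
      nlinarith [sq_nonneg (A 1 0)]
    ext i j
    fin_cases i <;> fin_cases j <;>
      simp [Theta, h, h00', h10, hsym ▸ h10]
  · have h11' : 0 < A 1 1 := lt_of_le_of_ne h11 (Ne.symm h)
    have hdet : (A 1 0) ^ 2 ≤ A 0 0 * A 1 1 := by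
      have := (Matrix.posSemidef_iff_dotProduct_mulVec.mp hA).2 ![A 1 1, -(A 1 0)]
      simp [dotProduct, Matrix.mulVec, Fin.sum_univ_two, hsym] at this
      nlinarith
    set s := Real.sqrt (A 0 0 * A 1 1 - (A 1 0) ^ 2) with hs
    set ζ : ℂ := ((A 1 0 : ℂ) + (s : ℂ) * Complex.I) / (A 1 1 : ℂ) with hζ
    have hre : ζ.re = A 1 0 / A 1 1 := by
      rw [hζ, Complex.div_ofReal_re]; simp
    have him : ζ.im = s / A 1 1 := by
      rw [hζ, Complex.div_ofReal_im]; simp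
    have hs2 : s ^ 2 = A 0 0 * A 1 1 - (A 1 0) ^ 2 :=
      Real.sq_sqrt (by linarith)
    have habs : ‖ζ‖ ^ 2 = A 0 0 / A 1 1 := by
      rw [sq_abs', hre, him, div_pow, div_pow, hs2]
      field_simp
      ring
    have hden : ‖ζ‖ ^ 2 + 1 = 1 / A 1 1 := by
      rw [habs]; field_simp; linarith
    ext i j
    fin_cases i <;> fin_cases j <;>
      · simp [Theta, h, hden, habs, hre, him, hsym]
        field_simp
        first
        | linarith
        | (rw [htr']; ring)

/-- `Θ` is a bijection from the closed upper half-plane (including `∞`) onto the set of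
real positive semidefinite `2×2` matrices with trace `1`, with inverse `ThetaInv`. -/
theorem theta_bijection :
    Set.BijOn Theta closedUHP
        {A : Matrix (Fin 2) (Fin 2) ℝ | A.PosSemidef ∧ A.trace = 1} ∧
      Set.InvOn ThetaInv Theta closedUHP
        {A : Matrix (Fin 2) (Fin 2) ℝ | A.PosSemidef ∧ A.trace = 1} := by
  have hinv : Set.InvOn ThetaInv Theta closedUHP
      {A : Matrix (Fin 2) (Fin 2) ℝ | A.PosSemidef ∧ A.trace = 1} :=
    ⟨theta_leftInv, theta_rightInv⟩
  exact ⟨hinv.bijOn theta_mapsTo thetaInv_mapsTo, hinv⟩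


end
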